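/- Main error bound for \textsc{RPCholesky} kernel quadrature (operator/matrix form): Let T be a psd trace-class operator with eigenvalues λ₁ ≥ λ₂ ≥ ⋯, and let (T_i) be a sequence of random psd operators with T₀ = T and E[T_i | T_{i−1}] = T_{i−1} − T_{i−1}²/Tr(T_{i−1}). For any integer r ≥ 0 and reals a, ε > 0, if n ≥ r·log(λ₁/a) + 1/ε then λ_max(E[T_n]) ≤ a + ε·∑_{i=r+1}^∞ λ_i. -/

import Mathlib

open MeasureTheory Matrix

/-- The expected one-step RPCholesky map `Φ(A) = A − A²/Tr A`. -/
noncomputable def rpcPhi {N : ℕ} (A : Matrix (Fin N) (Fin N) ℝ) :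
    Matrix (Fin N) (Fin N) ℝ :=
  A - A.trace⁻¹ • (A * A)

namespace RPCAux

noncomputable def phiVec {N : ℕ} (v : Fin N → ℝ) : Fin N → ℝ :=
  fun j => v j - (∑ l, v l)⁻¹ * (v j * v j)

variable {N : ℕ}

lemma sum_nonneg' {v : Fin N → ℝ} (hv : ∀ j, 0 ≤ v j) : 0 ≤ ∑ l, v l :=
  Finset.sum_nonneg fun j _ => hv j

lemma le_sum' {v : Fin N → ℝ} (hv : ∀ j, 0 ≤ v j) (j : Fin N) : v j ≤ ∑ l, v l :=
  Finset.single_le_sum (fun l _ => hv l) (Finset.mem_univ j)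

lemma pair_le_sum {v : Fin N → ℝ} (hv : ∀ j, 0 ≤ v j) {j k : Fin N} (hjk : j ≠ k) :
    v j + v k ≤ ∑ l, v l := by
  have : ∑ l ∈ ({j, k} : Finset (Fin N)), v l ≤ ∑ l, v l :=
    Finset.sum_le_sum_of_subset_of_nonneg (Finset.subset_univ _) (fun l _ _ => hv l)
  rwa [Finset.sum_pair hjk] at this

lemma phiVec_nonneg {v : Fin N → ℝ} (hv : ∀ j, 0 ≤ v j) (j : Fin N) : 0 ≤ phiVec v j := by
  unfold phiVec
  rcases eq_or_lt_of_le (sum_nonneg' hv) with h | h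
  · have : v j = 0 := le_antisymm (by linarith [le_sum' hv j]) (hv j)
    simp [this]
  · have h1 : (∑ l, v l)⁻¹ * (v j) ≤ 1 := by
      rw [← inv_mul_cancel₀ h.ne']
      exact mul_le_mul_of_nonneg_left (le_sum' hv j) (inv_nonneg.mpr h.le)
    nlinarith [hv j, inv_nonneg.mpr h.le]

lemma phiVec_le_self {v : Fin N → ℝ} (hv : ∀ j, 0 ≤ v j) (j : Fin N) : phiVec v j ≤ v j := by
  unfold phiVec
  nlinarith [mul_nonneg (inv_nonneg.mpr (sum_nonneg' hv)) (mul_self_nonneg (v j))]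

lemma phiVec_pair_mono {v : Fin N → ℝ} (hv : ∀ j, 0 ≤ v j) {j k : Fin N} (h : v j ≤ v k) :
    phiVec v j ≤ phiVec v k := by
  rcases eq_or_ne j k with rfl | hjk
  · exact le_refl _
  unfold phiVec
  rcases eq_or_lt_of_le (sum_nonneg' hv) with hs | hs
  · have hj : v j = 0 := le_antisymm (by linarith [le_sum' hv j]) (hv j)
    have hk : v k = 0 := le_antisymm (by linarith [le_sum' hv k]) (hv k)
    simp [hj, hk]
  · have h2 : (∑ l, v l)⁻¹ * (v j + v k) ≤ 1 := by
      rw [← inv_mul_cancel₀ hs.ne']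
      exact mul_le_mul_of_nonneg_left (pair_le_sum hv hjk) (inv_nonneg.mpr hs.le)
    nlinarith [mul_nonneg (sub_nonneg.mpr h) (sub_nonneg.mpr h2)]

lemma phiVec_antitone {v : Fin N → ℝ} (hv : ∀ j, 0 ≤ v j) (ha : Antitone v) :
    Antitone (phiVec v) := fun j k hjk => phiVec_pair_mono hv (ha hjk)

/-- potential step -/
lemma Wstep (r t x y : ℝ) (hr : 0 ≤ r) (ht : 0 ≤ t) (hy : 0 < y) (hrt : 0 < r * x + t)
    (hxy : y ≤ x - (r * x + t)⁻¹ * (x * x)) :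
    r * Real.log y - t / y + 1 ≤ r * Real.log x - t / x := by
  have hsub : 0 ≤ (r * x + t)⁻¹ * (x * x) :=
    mul_nonneg (inv_nonneg.mpr hrt.le) (mul_self_nonneg x)
  have hyx : y ≤ x := le_trans hxy (by linarith)
  have hx : 0 < x := lt_of_lt_of_le hy hyx
  -- log bound
  have hlog : Real.log x - Real.log y ≥ (x - y) / x := by
    have h1 := Real.log_le_sub_one_of_pos (div_pos hy hx)
    rw [Real.log_div hy.ne' hx.ne'] at h1
    have h2 : (x - y) / x = 1 - y / x := by field_simp
    linarith
  have hrlog : r * (Real.log x - Real.log y) ≥ r * ((x - y) / x) :=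
    mul_le_mul_of_nonneg_left hlog hr
  -- inverse bound
  have hinv : t / y - t / x ≥ t * ((x - y) / (x * x)) := by
    have e1 : t / y - t / x = t * (x - y) / (y * x) := by
      field_simp
    rw [ge_iff_le, e1, mul_div_assoc']
    exact div_le_div_of_nonneg_left (mul_nonneg ht (by linarith)) (mul_pos hy hx) (by nlinarith)
  have hd : x - y ≥ (r * x + t)⁻¹ * (x * x) := by linarith
  have hxx : (0:ℝ) < x * x := by positivity
  have key : r * ((x - y) / x) + t * ((x - y) / (x * x)) ≥ 1 := by
    have e2 : r * ((x - y) / x) + t * ((x - y) / (x * x)) = (x - y) * (r * x + t) / (x * x) := by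
      field_simp
    rw [e2, ge_iff_le, le_div_iff₀ hxx, one_mul]
    have h3 := mul_le_mul_of_nonneg_right hd hrt.le
    have h4 : (r * x + t)⁻¹ * (x * x) * (r * x + t) = x * x := by
      field_simp
    nlinarith
  linarith

namespace Scalar
open Finset

lemma iter_invariants {N : ℕ} {v : Fin N → ℝ} (hv : ∀ j, 0 ≤ v j) (ha : Antitone v) (i : ℕ) :
    (∀ j, 0 ≤ ((phiVec (N := N))^[i] v) j) ∧ Antitone ((phiVec (N := N))^[i] v) ∧ (∀ j, ((phiVec (N := N))^[i] v) j ≤ v j) := by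
  induction i with
  | zero => exact ⟨hv, ha, fun j => le_refl _⟩
  | succ i ih =>
    obtain ⟨h0, h1, h2⟩ := ih
    rw [Function.iterate_succ_apply']
    exact ⟨phiVec_nonneg h0, phiVec_antitone h0 h1,
      fun j => le_trans (phiVec_le_self h0 j) (h2 j)⟩

lemma card_filter_lt_le (N r : ℕ) :
    (Finset.univ.filter (fun l : Fin N => ¬ r ≤ (l : ℕ))).card ≤ r := by
  classical
  have : (Finset.univ.filter (fun l : Fin N => ¬ r ≤ (l : ℕ))).card =
      ((Finset.univ.filter (fun l : Fin N => ¬ r ≤ (l : ℕ))).image Fin.val).card := by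
    rw [Finset.card_image_of_injective _ Fin.val_injective]
  rw [this]
  have hsub : (Finset.univ.filter (fun l : Fin N => ¬ r ≤ (l : ℕ))).image Fin.val ⊆
      Finset.range r := by
    intro x hx
    simp only [Finset.mem_image, Finset.mem_filter, Finset.mem_range] at hx ⊢
    obtain ⟨l, ⟨-, hl⟩, rfl⟩ := hx
    omega
  simpa using Finset.card_le_card hsub

/-- Sum bound: `∑ w ≤ r * w₀ + t`. -/
lemma sum_le_head_tail {N : ℕ} (hN : 0 < N) {w v : Fin N → ℝ} (hw0 : ∀ j, 0 ≤ w j)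
    (hwa : Antitone w) (hwv : ∀ j, w j ≤ v j) (r : ℕ) :
    ∑ l, w l ≤ (r : ℝ) * w ⟨0, hN⟩ +
      ∑ l ∈ Finset.univ.filter (fun l : Fin N => r ≤ (l : ℕ)), v l := by
  classical
  rw [← Finset.sum_filter_add_sum_filter_not Finset.univ (fun l : Fin N => r ≤ (l : ℕ))]
  have h1 : ∑ l ∈ Finset.univ.filter (fun l : Fin N => r ≤ (l : ℕ)), w l ≤
      ∑ l ∈ Finset.univ.filter (fun l : Fin N => r ≤ (l : ℕ)), v l :=
    Finset.sum_le_sum fun l _ => hwv l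
  have h2 : ∑ l ∈ Finset.univ.filter (fun l : Fin N => ¬ r ≤ (l : ℕ)), w l ≤
      (r : ℝ) * w ⟨0, hN⟩ := by
    have hle : ∀ l : Fin N, w l ≤ w ⟨0, hN⟩ := fun l => hwa (by simp [Fin.le_def])
    calc ∑ l ∈ Finset.univ.filter (fun l : Fin N => ¬ r ≤ (l : ℕ)), w l
        ≤ ∑ _l ∈ Finset.univ.filter (fun l : Fin N => ¬ r ≤ (l : ℕ)), w ⟨0, hN⟩ :=
          Finset.sum_le_sum fun l _ => hle l
      _ = ((Finset.univ.filter (fun l : Fin N => ¬ r ≤ (l : ℕ))).card : ℝ) * w ⟨0, hN⟩ := by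
          rw [Finset.sum_const, nsmul_eq_mul]
      _ ≤ (r : ℝ) * w ⟨0, hN⟩ := by
          apply mul_le_mul_of_nonneg_right _ (hw0 _)
          exact_mod_cast card_filter_lt_le N r
  linarith

/-- Main scalar bound. -/
lemma scalar_main {N : ℕ} (hN : 0 < N) (v : Fin N → ℝ) (hv0 : ∀ j, 0 ≤ v j) (hanti : Antitone v)
    (r : ℕ) (a ε : ℝ) (ha : 0 < a) (hε : 0 < ε) (n : ℕ)
    (hn : (n : ℝ) ≥ r * Real.log (v ⟨0, hN⟩ / a) + 1 / ε) (j : Fin N) :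
    ((phiVec (N := N))^[n] v) j ≤ a + ε * ∑ l ∈ Finset.univ.filter (fun l : Fin N => r ≤ (l : ℕ)), v l := by
  classical
  set t : ℝ := ∑ l ∈ Finset.univ.filter (fun l : Fin N => r ≤ (l : ℕ)), v l with ht
  have ht0 : 0 ≤ t := Finset.sum_nonneg fun l _ => hv0 l
  set b : ℝ := a + ε * t with hb
  have hb0 : 0 < b := by nlinarith
  set z : ℕ → ℝ := fun i => (phiVec (N := N))^[i] v ⟨0, hN⟩ with hz
  have hinv := iter_invariants hv0 hanti
  have hjz : (phiVec (N := N))^[n] v j ≤ z n := (hinv n).2.1 (by simp [Fin.le_def])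
  suffices hzn : z n ≤ b by linarith
  by_contra hcon
  push_neg at hcon
  -- z is antitone in i
  have hzstep : ∀ i, z (i + 1) ≤ z i := by
    intro i
    have := phiVec_le_self (hinv i).1 (⟨0, hN⟩ : Fin N)
    simpa [hz, Function.iterate_succ_apply'] using this
  have hzanti : ∀ i k, i ≤ k → z k ≤ z i := fun i k h =>
    antitone_nat_of_succ_le hzstep h
  have hbz : ∀ i, i ≤ n → b < z i := fun i h => lt_of_lt_of_le hcon (hzanti i n h)
  -- one potential step
  have hstep : ∀ i, i < n →
      (r : ℝ) * Real.log (z (i + 1)) - t / z (i + 1) + 1 ≤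
        (r : ℝ) * Real.log (z i) - t / z i := by
    intro i hi
    have hzi : b < z i := hbz i (le_of_lt hi)
    have hzi1 : b < z (i + 1) := hbz (i + 1) hi
    have hsum_lb : z i ≤ ∑ l, (phiVec (N := N))^[i] v l := le_sum' (hinv i).1 _
    have hsum_ub : ∑ l, (phiVec (N := N))^[i] v l ≤ (r : ℝ) * z i + t :=
      sum_le_head_tail hN (hinv i).1 (hinv i).2.1 (hinv i).2.2 r
    have hrt : 0 < (r : ℝ) * z i + t := by linarith
    apply Wstep _ _ _ _ (Nat.cast_nonneg r) ht0 (lt_trans hb0 hzi1) hrt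
    -- z (i+1) ≤ z i - (r z i + t)⁻¹ (z i)²
    have hs0 : 0 < ∑ l, (phiVec (N := N))^[i] v l := by linarith
    have hzdef : z (i + 1) = z i - (∑ l, (phiVec (N := N))^[i] v l)⁻¹ * (z i * z i) := by
      simp only [hz, Function.iterate_succ_apply']
      rfl
    have hii : ((r : ℝ) * z i + t)⁻¹ ≤ (∑ l, (phiVec (N := N))^[i] v l)⁻¹ :=
      inv_anti₀ hs0 hsum_ub
    have := mul_le_mul_of_nonneg_right hii (mul_self_nonneg (z i))
    linarith [hzdef ▸ le_refl (z (i+1))]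
  -- telescope
  have htel : ∀ i, i ≤ n →
      (r : ℝ) * Real.log (z i) - t / z i + i ≤ (r : ℝ) * Real.log (z 0) - t / z 0 := by
    intro i hi
    induction i with
    | zero => simp
    | succ i ih =>
      have h1 := hstep i hi
      have h2 := ih (le_of_lt hi)
      push_cast
      linarith
  have hfin := htel n (le_refl n)
  -- bounds
  have hz0 : z 0 = v ⟨0, hN⟩ := rfl
  have hzn' : b < z n := hcon
  have hzn0 : z n ≤ z 0 := hzanti 0 n (Nat.zero_le n)
  have haz : a < z n := by nlinarith
  have hz0pos : 0 < z 0 := lt_of_lt_of_le (lt_trans hb0 hzn') hzn0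
  have hlog : Real.log (z 0) - Real.log (z n) ≤ Real.log (z 0 / a) := by
    rw [Real.log_div hz0pos.ne' ha.ne']
    have hmono : Real.log a ≤ Real.log (z n) := Real.log_le_log ha haz.le
    linarith
  have hrlog : (r : ℝ) * (Real.log (z 0) - Real.log (z n)) ≤ (r : ℝ) * Real.log (z 0 / a) :=
    mul_le_mul_of_nonneg_left hlog (Nat.cast_nonneg r)
  have htzn : t / z n < 1 / ε := by
    have h1 : t / z n ≤ t / b := by
      apply div_le_div_of_nonneg_left ht0 hb0 hzn'.le
    have h2 : t / b < 1 / ε := by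
      rw [div_lt_div_iff₀ hb0 hε]
      nlinarith
    linarith
  have htz0 : 0 ≤ t / z 0 := div_nonneg ht0 hz0pos.le
  rw [hz0] at hrlog hfin htz0
  linarith

end Scalar

section Mat
open Matrix

variable {N : ℕ}

lemma star_vec (x : Fin N → ℝ) : star x = x := by
  funext i; simp

lemma dot_self_nonneg (x : Fin N → ℝ) : 0 ≤ x ⬝ᵥ x :=
  Finset.sum_nonneg fun i _ => mul_self_nonneg (x i)

lemma psd_def {M : Matrix (Fin N) (Fin N) ℝ} (hM : M.PosSemidef) (x : Fin N → ℝ) :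
    0 ≤ x ⬝ᵥ (M *ᵥ x) := by
  have := hM.dotProduct_mulVec_nonneg x
  rwa [star_vec] at this

lemma psd_mk {M : Matrix (Fin N) (Fin N) ℝ} (h1 : M.IsHermitian)
    (h2 : ∀ x, 0 ≤ x ⬝ᵥ (M *ᵥ x)) : M.PosSemidef :=
  Matrix.PosSemidef.of_dotProduct_mulVec_nonneg h1 fun x => by rw [star_vec]; exact h2 x

lemma transpose_of_herm {M : Matrix (Fin N) (Fin N) ℝ} (hM : M.IsHermitian) : Mᵀ = M := by
  rw [← Matrix.conjTranspose_eq_transpose_of_trivial]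
  exact hM

/-- move a symmetric matrix across the dot product -/
lemma dot_mulVec_symm {M : Matrix (Fin N) (Fin N) ℝ} (hM : M.IsHermitian)
    (v w : Fin N → ℝ) : v ⬝ᵥ (M *ᵥ w) = (M *ᵥ v) ⬝ᵥ w := by
  rw [Matrix.dotProduct_mulVec, ← Matrix.mulVec_transpose, transpose_of_herm hM]

/-- completing the square -/
lemma key_ineq (x z : Fin N → ℝ) (s : ℝ) (hs : 0 < s) :
    2 * (z ⬝ᵥ x) - s * (z ⬝ᵥ z) ≤ s⁻¹ * (x ⬝ᵥ x) := by
  have h0 : 0 ≤ (x - s • z) ⬝ᵥ (x - s • z) := dot_self_nonneg _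
  have hexp : (x - s • z) ⬝ᵥ (x - s • z)
      = x ⬝ᵥ x - 2 * s * (z ⬝ᵥ x) + s * s * (z ⬝ᵥ z) := by
    simp only [sub_dotProduct, dotProduct_sub, smul_dotProduct,
      dotProduct_smul, smul_eq_mul]
    rw [dotProduct_comm x z]
    ring
  rw [hexp] at h0
  have h1 : 0 ≤ s⁻¹ * (x ⬝ᵥ x - 2 * s * (z ⬝ᵥ x) + s * s * (z ⬝ᵥ z)) :=
    mul_nonneg (inv_nonneg.mpr hs.le) h0
  have h2 : s⁻¹ * (x ⬝ᵥ x - 2 * s * (z ⬝ᵥ x) + s * s * (z ⬝ᵥ z))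
      = s⁻¹ * (x ⬝ᵥ x) - 2 * (z ⬝ᵥ x) + s * (z ⬝ᵥ z) := by
    field_simp
  linarith

end Mat

section Spectral
open Matrix

variable {N : ℕ}

lemma ofReal_comp (d : Fin N → ℝ) : ((RCLike.ofReal : ℝ → ℝ) ∘ d) = d := by
  funext j
  simp [RCLike.ofReal_real_eq_id]

lemma spectral_real {H : Matrix (Fin N) (Fin N) ℝ} (hH : H.IsHermitian) :
    H = (hH.eigenvectorUnitary : Matrix (Fin N) (Fin N) ℝ) * Matrix.diagonal hH.eigenvalues *
      star (hH.eigenvectorUnitary : Matrix (Fin N) (Fin N) ℝ) := by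
  conv_lhs => rw [hH.spectral_theorem]
  rw [ofReal_comp]
  rfl

lemma dot_conj (U D : Matrix (Fin N) (Fin N) ℝ) (z : Fin N → ℝ) :
    z ⬝ᵥ ((U * D * star U) *ᵥ z) = (star U *ᵥ z) ⬝ᵥ (D *ᵥ (star U *ᵥ z)) := by
  have hsU : star U = Uᵀ := by
    rw [Matrix.star_eq_conjTranspose, Matrix.conjTranspose_eq_transpose_of_trivial]
  rw [hsU, ← Matrix.mulVec_mulVec, ← Matrix.mulVec_mulVec, Matrix.dotProduct_mulVec,
    ← Matrix.mulVec_transpose]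

lemma trace_conj (U : Matrix (Fin N) (Fin N) ℝ) (hU : U ∈ Matrix.unitaryGroup (Fin N) ℝ)
    (D : Matrix (Fin N) (Fin N) ℝ) : (U * D * star U).trace = D.trace := by
  rw [Matrix.trace_mul_cycle, (Matrix.mem_unitaryGroup_iff').mp hU, Matrix.one_mul]

lemma dot_unitary (U : Matrix (Fin N) (Fin N) ℝ) (hU : U ∈ Matrix.unitaryGroup (Fin N) ℝ)
    (z : Fin N → ℝ) : (star U *ᵥ z) ⬝ᵥ (star U *ᵥ z) = z ⬝ᵥ z := by
  have h := dot_conj U 1 z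
  rw [Matrix.mul_one, (Matrix.mem_unitaryGroup_iff).mp hU, Matrix.one_mulVec,
    Matrix.one_mulVec] at h
  exact h.symm

lemma dot_diagonal (d : Fin N → ℝ) (w : Fin N → ℝ) :
    w ⬝ᵥ (Matrix.diagonal d *ᵥ w) = ∑ j, d j * (w j * w j) := by
  simp only [dotProduct, Matrix.mulVec_diagonal]
  apply Finset.sum_congr rfl
  intro j _
  ring

/-- Key psd bound: `z ⬝ᵥ H z ≤ tr H * ‖z‖²`. -/
lemma psd_dot_le_trace {H : Matrix (Fin N) (Fin N) ℝ} (hH : H.PosSemidef) (z : Fin N → ℝ) :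
    z ⬝ᵥ (H *ᵥ z) ≤ H.trace * (z ⬝ᵥ z) := by
  classical
  set U : Matrix (Fin N) (Fin N) ℝ := (hH.1.eigenvectorUnitary : Matrix (Fin N) (Fin N) ℝ)
  have hU : U ∈ Matrix.unitaryGroup (Fin N) ℝ := (hH.1.eigenvectorUnitary).2
  set d := hH.1.eigenvalues
  have hspec := spectral_real hH.1
  have htr : H.trace = ∑ j, d j := by
    conv_lhs => rw [hspec]
    rw [trace_conj U hU, Matrix.trace_diagonal]
  set w := star U *ᵥ z with hw
  have h1 : z ⬝ᵥ (H *ᵥ z) = ∑ j, d j * (w j * w j) := by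
    conv_lhs => rw [hspec]
    rw [dot_conj, dot_diagonal]
  have h2 : z ⬝ᵥ z = ∑ j, w j * w j := by
    rw [← dot_unitary U hU z]
    rfl
  rw [h1, htr, h2]
  have hd : ∀ l, 0 ≤ d l := fun l => hH.eigenvalues_nonneg l
  calc ∑ j, d j * (w j * w j)
      ≤ ∑ j, (∑ l, d l) * (w j * w j) :=
        Finset.sum_le_sum fun j _ => mul_le_mul_of_nonneg_right
          (Finset.single_le_sum (fun l _ => hd l) (Finset.mem_univ j)) (mul_self_nonneg _)
    _ = (∑ l, d l) * ∑ j, w j * w j := (Finset.mul_sum _ _ _).symm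

/-- quadratic form of `rpcPhi`. -/
lemma qf_rpcPhi {H : Matrix (Fin N) (Fin N) ℝ} (hH : H.IsHermitian) (v : Fin N → ℝ) :
    v ⬝ᵥ (rpcPhi H *ᵥ v)
      = v ⬝ᵥ (H *ᵥ v) - H.trace⁻¹ * ((H *ᵥ v) ⬝ᵥ (H *ᵥ v)) := by
  unfold rpcPhi
  rw [Matrix.sub_mulVec, dotProduct_sub, Matrix.smul_mulVec,
    dotProduct_smul, smul_eq_mul, ← Matrix.mulVec_mulVec,
    dot_mulVec_symm hH v (H *ᵥ v)]

lemma conj_herm (U : Matrix (Fin N) (Fin N) ℝ) (e : Fin N → ℝ) :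
    ((U * Matrix.diagonal e * star U)).IsHermitian := by
  rw [Matrix.star_eq_conjTranspose]
  exact Matrix.isHermitian_mul_mul_conjTranspose U (Matrix.isHermitian_diagonal e)

/-- conjugation formula for `rpcPhi`. -/
lemma rpcPhi_conj (U : Matrix (Fin N) (Fin N) ℝ) (hU : U ∈ Matrix.unitaryGroup (Fin N) ℝ)
    (e : Fin N → ℝ) :
    rpcPhi (U * Matrix.diagonal e * star U) = U * Matrix.diagonal (phiVec e) * star U := by
  have hU' : star U * U = 1 := (Matrix.mem_unitaryGroup_iff').mp hU
  have htr : (U * Matrix.diagonal e * star U).trace = ∑ l, e l := by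
    rw [trace_conj U hU, Matrix.trace_diagonal]
  have hsq : (U * Matrix.diagonal e * star U) * (U * Matrix.diagonal e * star U)
      = U * Matrix.diagonal (fun j => e j * e j) * star U := by
    simp only [Matrix.mul_assoc]
    rw [← Matrix.mul_assoc (star U) U, hU', Matrix.one_mul,
      ← Matrix.mul_assoc (Matrix.diagonal e) (Matrix.diagonal e), Matrix.diagonal_mul_diagonal]
  unfold rpcPhi
  rw [htr, hsq]
  have hsmul : (∑ l, e l)⁻¹ • (U * Matrix.diagonal (fun j => e j * e j) * star U)
      = U * ((∑ l, e l)⁻¹ • Matrix.diagonal (fun j => e j * e j)) * star U := by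
    rw [Matrix.mul_smul, Matrix.smul_mul]
  rw [hsmul, ← Matrix.sub_mul, ← Matrix.mul_sub, ← Matrix.diagonal_smul, Matrix.diagonal_sub]
  congr 2 with j

/-- `c • 1 - U diag f U*` is psd when all `f j ≤ c`. -/
lemma smul_one_sub_conj_psd (U : Matrix (Fin N) (Fin N) ℝ)
    (hU : U ∈ Matrix.unitaryGroup (Fin N) ℝ) (f : Fin N → ℝ) (c : ℝ) (hf : ∀ j, f j ≤ c) :
    (c • (1 : Matrix (Fin N) (Fin N) ℝ) - U * Matrix.diagonal f * star U).PosSemidef := by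
  have h1 : c • (1 : Matrix (Fin N) (Fin N) ℝ)
      = U * Matrix.diagonal (fun _ => c) * star U := by
    rw [← Matrix.smul_one_eq_diagonal, Matrix.mul_smul, Matrix.smul_mul, Matrix.mul_one,
      (Matrix.mem_unitaryGroup_iff).mp hU]
  rw [h1, ← Matrix.sub_mul, ← Matrix.mul_sub, Matrix.diagonal_sub]
  have h2 : (Matrix.diagonal (fun j => c - f j)).PosSemidef :=
    Matrix.PosSemidef.diagonal (fun j => sub_nonneg.mpr (hf j))
  have := h2.mul_mul_conjTranspose_same U
  rwa [← Matrix.star_eq_conjTranspose] at this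

end Spectral

section Mono
open Matrix

variable {N : ℕ}

lemma single_qf (H : Matrix (Fin N) (Fin N) ℝ) (j : Fin N) :
    (Pi.single j 1 : Fin N → ℝ) ⬝ᵥ (H *ᵥ Pi.single j 1) = H j j := by
  simp [dotProduct, Matrix.mulVec, Pi.single_apply, Finset.mul_sum]

lemma trace_nonneg_of_psd {H : Matrix (Fin N) (Fin N) ℝ} (hH : H.PosSemidef) : 0 ≤ H.trace := by
  have h : ∀ j, 0 ≤ H j j := fun j => by
    have := psd_def hH (Pi.single j 1)
    rwa [single_qf] at this
  exact Finset.sum_nonneg fun j _ => h j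

lemma phi_superadd {X H : Matrix (Fin N) (Fin N) ℝ} (hX : X.PosSemidef) (hH : H.PosSemidef)
    (hs : 0 < X.trace) (v : Fin N → ℝ) :
    v ⬝ᵥ (rpcPhi X *ᵥ v) ≤ v ⬝ᵥ (rpcPhi (X + H) *ᵥ v) := by
  have hhtr : 0 ≤ H.trace := trace_nonneg_of_psd hH
  have hYtr : (X + H).trace = X.trace + H.trace := Matrix.trace_add X H
  have hY : 0 < (X + H).trace := by rw [hYtr]; linarith
  have hherm : (X + H).IsHermitian := hX.1.add hH.1
  rw [qf_rpcPhi hX.1 v, qf_rpcPhi hherm v]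
  set s := X.trace with hsdef
  set sy := (X + H).trace with hsydef
  set xv := X *ᵥ v with hxv
  set hv := H *ᵥ v with hhv
  set Yv := (X + H) *ᵥ v with hYvdef
  have hYv : Yv = xv + hv := Matrix.add_mulVec X H v
  set z := sy⁻¹ • Yv with hzdef
  have hid : sy⁻¹ * (Yv ⬝ᵥ Yv) = 2 * (z ⬝ᵥ Yv) - sy * (z ⬝ᵥ z) := by
    rw [hzdef]
    simp only [smul_dotProduct, dotProduct_smul, smul_eq_mul]
    field_simp
    ring
  have hsplit : z ⬝ᵥ Yv = z ⬝ᵥ xv + z ⬝ᵥ hv := by rw [hYv, dotProduct_add]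
  have h1 : 2 * (z ⬝ᵥ xv) - s * (z ⬝ᵥ z) ≤ s⁻¹ * (xv ⬝ᵥ xv) := key_ineq xv z s hs
  have h2 : 2 * (z ⬝ᵥ hv) - H.trace * (z ⬝ᵥ z) ≤ v ⬝ᵥ hv := by
    have hpair : 0 ≤ (v - z) ⬝ᵥ (H *ᵥ (v - z)) := psd_def hH (v - z)
    have hexp : (v - z) ⬝ᵥ (H *ᵥ (v - z))
        = v ⬝ᵥ hv - 2 * (z ⬝ᵥ hv) + z ⬝ᵥ (H *ᵥ z) := by
      rw [Matrix.mulVec_sub, dotProduct_sub, sub_dotProduct,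
        sub_dotProduct, dot_mulVec_symm hH.1 v z, dotProduct_comm (H *ᵥ v) z]
      ring
    have h3 : z ⬝ᵥ (H *ᵥ z) ≤ H.trace * (z ⬝ᵥ z) := psd_dot_le_trace hH z
    linarith
  have hid2 : sy * (z ⬝ᵥ z) = s * (z ⬝ᵥ z) + H.trace * (z ⬝ᵥ z) := by
    rw [hYtr]
    ring
  have hvY : v ⬝ᵥ Yv = v ⬝ᵥ xv + v ⬝ᵥ hv := by rw [hYv, dotProduct_add]
  linarith

end Mono

section Perm
open Matrix

variable {N : ℕ}

lemma phiVec_comp_perm (v : Fin N → ℝ) (e : Equiv.Perm (Fin N)) :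
    phiVec (v ∘ e) = (phiVec v) ∘ e := by
  funext j
  simp only [phiVec, Function.comp_apply]
  rw [Equiv.sum_comp e v]

lemma phiVec_iter_comp_perm (v : Fin N → ℝ) (e : Equiv.Perm (Fin N)) (n : ℕ) :
    (phiVec (N := N))^[n] (v ∘ e) = ((phiVec (N := N))^[n] v) ∘ e := by
  induction n with
  | zero => rfl
  | succ n ih => rw [Function.iterate_succ_apply', Function.iterate_succ_apply', ih,
      phiVec_comp_perm]

end Perm

section Expect
open Matrix MeasureTheory

variable {N : ℕ} {Ω : Type*} {m0 : MeasurableSpace Ω} {μ : Measure Ω}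

lemma qf_expand (M : Matrix (Fin N) (Fin N) ℝ) (u v : Fin N → ℝ) :
    u ⬝ᵥ (M *ᵥ v) = ∑ x, ∑ y, u x * v y * M x y := by
  simp only [dotProduct, Matrix.mulVec, Finset.mul_sum]
  refine Finset.sum_congr rfl fun x _ => Finset.sum_congr rfl fun y _ => by ring

lemma integrable_qf {W : Ω → Matrix (Fin N) (Fin N) ℝ}
    (hW : ∀ x y, Integrable (fun ω => W ω x y) μ) (u v : Fin N → ℝ) :
    Integrable (fun ω => u ⬝ᵥ (W ω *ᵥ v)) μ := by
  have h : (fun ω => u ⬝ᵥ (W ω *ᵥ v)) = fun ω => ∑ x, ∑ y, u x * v y * W ω x y := by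
    funext ω
    exact qf_expand _ u v
  rw [h]
  exact integrable_finset_sum _ fun x _ =>
    integrable_finset_sum _ fun y _ => (hW x y).const_mul _

lemma integral_qf {W : Ω → Matrix (Fin N) (Fin N) ℝ}
    (hW : ∀ x y, Integrable (fun ω => W ω x y) μ) (u v : Fin N → ℝ) :
    ∫ ω, u ⬝ᵥ (W ω *ᵥ v) ∂μ
      = u ⬝ᵥ ((Matrix.of fun x y => ∫ ω, W ω x y ∂μ) *ᵥ v) := by
  rw [qf_expand]
  have h1 : ∀ ω, u ⬝ᵥ (W ω *ᵥ v) = ∑ x, ∑ y, u x * v y * W ω x y := fun ω => qf_expand _ u v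
  calc ∫ ω, u ⬝ᵥ (W ω *ᵥ v) ∂μ
      = ∫ ω, ∑ x, ∑ y, u x * v y * W ω x y ∂μ := by simp_rw [h1]
    _ = ∑ x, ∑ y, u x * v y * ∫ ω, W ω x y ∂μ := by
        rw [integral_finset_sum _ (fun x _ =>
          integrable_finset_sum _ (fun y _ => (hW x y).const_mul _))]
        refine Finset.sum_congr rfl fun x _ => ?_
        rw [integral_finset_sum _ (fun y _ => (hW x y).const_mul _)]
        exact Finset.sum_congr rfl fun y _ => integral_const_mul _ _
    _ = ∑ x, ∑ y, u x * v y * (Matrix.of fun x y => ∫ ω, W ω x y ∂μ) x y := rfl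

lemma integrable_trace {W : Ω → Matrix (Fin N) (Fin N) ℝ}
    (hW : ∀ x y, Integrable (fun ω => W ω x y) μ) :
    Integrable (fun ω => (W ω).trace) μ := by
  have h : (fun ω => (W ω).trace) = fun ω => ∑ x, W ω x x := by
    funext ω
    rfl
  rw [h]
  exact integrable_finset_sum _ fun x _ => hW x x

lemma integral_trace {W : Ω → Matrix (Fin N) (Fin N) ℝ}
    (hW : ∀ x y, Integrable (fun ω => W ω x y) μ) :
    ∫ ω, (W ω).trace ∂μ = (Matrix.of fun x y => ∫ ω, W ω x y ∂μ).trace := by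
  have h : (fun ω => (W ω).trace) = fun ω => ∑ x, W ω x x := by
    funext ω
    rfl
  rw [h, integral_finset_sum _ (fun x _ => hW x x)]
  rfl

end Expect
end RPCAux

/-- Main RPCholesky error bound (matrix form): if `T₀ = A` has sorted
eigenvalues `λ₁ ≥ λ₂ ≥ ⋯` and `E[T_{i+1} | ℱ_i] = Φ(T_i)`, then for any `r ≥ 0`
and `a, ε > 0`, `n ≥ r log(λ₁/a) + 1/ε` implies
`λ_max(E[T_n]) ≤ a + ε ∑_{j > r} λ_j`. -/
theorem rpcholesky_main_error_bound {N : ℕ} (hN : 0 < N)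
    {Ω : Type*} {m0 : MeasurableSpace Ω} (μ : Measure Ω) [IsProbabilityMeasure μ]
    (m : ℕ → MeasurableSpace Ω) (hm : ∀ i, m i ≤ m0)
    (A : Matrix (Fin N) (Fin N) ℝ) (hA : A.PosSemidef)
    (eig : Fin N → ℝ) (σ : Equiv.Perm (Fin N))
    (heig : eig = hA.1.eigenvalues ∘ σ) (hanti : Antitone eig)
    (T : ℕ → Ω → Matrix (Fin N) (Fin N) ℝ)
    (hT0 : ∀ ω, T 0 ω = A)
    (hTpsd : ∀ i, ∀ᵐ ω ∂μ, (T i ω).PosSemidef ∧ ((T i ω) - (T (i + 1) ω)).PosSemidef)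
    (hTtr : ∀ i, ∀ᵐ ω ∂μ, 0 < (T i ω).trace)
    (hint : ∀ i x y, Integrable (fun ω => T i ω x y) μ)
    (hcond : ∀ i x y,
      μ[(fun ω => T (i + 1) ω x y) | m i] =ᵐ[μ] fun ω => rpcPhi (T i ω) x y)
    (r : ℕ) (a ε : ℝ) (ha : 0 < a) (hε : 0 < ε)
    (n : ℕ)
    (hn : (n : ℝ) ≥ r * Real.log (eig ⟨0, hN⟩ / a) + 1 / ε) :
    ((a + ε * ∑ j ∈ Finset.univ.filter (fun j : Fin N => r ≤ (j : ℕ)), eig j) •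
        (1 : Matrix (Fin N) (Fin N) ℝ)
      - Matrix.of fun x y => ∫ ω, T n ω x y ∂μ).PosSemidef := by
  classical
  have hAherm := hA.1
  set c : ℝ := a + ε * ∑ j ∈ Finset.univ.filter (fun j : Fin N => r ≤ (j : ℕ)), eig j with hc
  set U : Matrix (Fin N) (Fin N) ℝ := (hAherm.eigenvectorUnitary : Matrix (Fin N) (Fin N) ℝ)
    with hUdef
  have hUu : U ∈ Matrix.unitaryGroup (Fin N) ℝ := (hAherm.eigenvectorUnitary).2
  set d : Fin N → ℝ := hAherm.eigenvalues with hd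
  set P : ℕ → Matrix (Fin N) (Fin N) ℝ :=
    fun i => U * Matrix.diagonal ((RPCAux.phiVec (N := N))^[i] d) * star U with hP
  set M : ℕ → Matrix (Fin N) (Fin N) ℝ :=
    fun i => Matrix.of fun x y => ∫ ω, T i ω x y ∂μ with hMdef
  show (c • (1 : Matrix (Fin N) (Fin N) ℝ) - M n).PosSemidef
  have hP0 : P 0 = A := by
    have h0 : P 0 = U * Matrix.diagonal d * star U := rfl
    rw [h0]
    exact (RPCAux.spectral_real hAherm).symm
  have hPsucc : ∀ i, P (i + 1) = rpcPhi (P i) := by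
    intro i
    have h1 : P i = U * Matrix.diagonal ((RPCAux.phiVec (N := N))^[i] d) * star U := rfl
    have h2 : P (i + 1) = U * Matrix.diagonal ((RPCAux.phiVec (N := N))^[i + 1] d) * star U := rfl
    rw [h1, h2, RPCAux.rpcPhi_conj U hUu, Function.iterate_succ_apply']
  have hPherm : ∀ i, (P i).IsHermitian := fun i => RPCAux.conj_herm U _
  have hM0 : M 0 = A := by
    ext x y
    show (∫ ω, T 0 ω x y ∂μ) = A x y
    simp [hT0]
  have hMqf : ∀ i (v : Fin N → ℝ), v ⬝ᵥ (M i *ᵥ v) = ∫ ω, v ⬝ᵥ (T i ω *ᵥ v) ∂μ :=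
    fun i v => (RPCAux.integral_qf (hint i) v v).symm
  have hMherm : ∀ i, (M i).IsHermitian := by
    intro i
    show (M i)ᴴ = M i
    ext x y
    show star ((M i) y x) = (M i) x y
    rw [star_trivial]
    show (∫ ω, T i ω y x ∂μ) = ∫ ω, T i ω x y ∂μ
    apply integral_congr_ae
    filter_upwards [hTpsd i] with ω hω
    have h := hω.1.1
    have h2 : (T i ω)ᴴ x y = T i ω x y := by rw [h]
    simpa [Matrix.conjTranspose_apply] using h2
  have hMpsd : ∀ i, (M i).PosSemidef := by
    intro i
    refine RPCAux.psd_mk (hMherm i) fun v => ?_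
    rw [hMqf]
    exact integral_nonneg_of_ae ((hTpsd i).mono fun ω hω => RPCAux.psd_def hω.1 v)
  have htrM : ∀ i, (M i).trace = ∫ ω, (T i ω).trace ∂μ :=
    fun i => (RPCAux.integral_trace (hint i)).symm
  have hMtr : ∀ i, 0 < (M i).trace := by
    intro i
    rw [htrM i]
    have hitr := RPCAux.integrable_trace (μ := μ) (hint i)
    by_contra hcon
    push_neg at hcon
    have h0 : 0 ≤ ∫ ω, (T i ω).trace ∂μ :=
      integral_nonneg_of_ae ((hTtr i).mono fun ω h => h.le)
    have hz : ∫ ω, (T i ω).trace ∂μ = 0 := le_antisymm hcon h0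
    have hae0 : (fun ω => (T i ω).trace) =ᵐ[μ] 0 :=
      (integral_eq_zero_iff_of_nonneg_ae ((hTtr i).mono fun ω h => h.le) hitr).mp hz
    have hfalse : ∀ᵐ ω ∂μ, False := by
      filter_upwards [hTtr i, hae0] with ω h1 h2
      exact absurd h2 (ne_of_gt h1)
    rw [ae_iff] at hfalse
    simp only [not_false_eq_true, Set.setOf_true] at hfalse
    rw [measure_univ] at hfalse
    exact one_ne_zero hfalse
  have hPhiInt : ∀ i x y, Integrable (fun ω => rpcPhi (T i ω) x y) μ :=
    fun i x y => (integrable_condExp).congr (hcond i x y)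
  have hMsucc : ∀ i, M (i + 1) = Matrix.of fun x y => ∫ ω, rpcPhi (T i ω) x y ∂μ := by
    intro i
    ext x y
    show (∫ ω, T (i + 1) ω x y ∂μ) = ∫ ω, rpcPhi (T i ω) x y ∂μ
    rw [← integral_condExp (hm i)]
    exact integral_congr_ae (hcond i x y)
  have hstep : ∀ i (v : Fin N → ℝ),
      v ⬝ᵥ (M (i + 1) *ᵥ v) ≤ v ⬝ᵥ (rpcPhi (M i) *ᵥ v) := by
    intro i v
    have hs : 0 < (M i).trace := hMtr i
    set z : Fin N → ℝ := (M i).trace⁻¹ • (M i *ᵥ v) with hz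
    have hrw : v ⬝ᵥ (M (i + 1) *ᵥ v) = ∫ ω, v ⬝ᵥ (rpcPhi (T i ω) *ᵥ v) ∂μ := by
      rw [hMsucc i]
      exact (RPCAux.integral_qf (fun x y => hPhiInt i x y) v v).symm
    set g : Ω → ℝ := fun ω =>
      v ⬝ᵥ (T i ω *ᵥ v) - (2 * (z ⬝ᵥ (T i ω *ᵥ v)) - (T i ω).trace * (z ⬝ᵥ z)) with hg
    have hbound : ∀ᵐ ω ∂μ, v ⬝ᵥ (rpcPhi (T i ω) *ᵥ v) ≤ g ω := by
      filter_upwards [hTpsd i, hTtr i] with ω h1 h2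
      rw [RPCAux.qf_rpcPhi h1.1.1 v]
      have hk := RPCAux.key_ineq (T i ω *ᵥ v) z (T i ω).trace h2
      show _ ≤ v ⬝ᵥ (T i ω *ᵥ v) - (2 * (z ⬝ᵥ (T i ω *ᵥ v)) - (T i ω).trace * (z ⬝ᵥ z))
      have hcomm : z ⬝ᵥ (T i ω *ᵥ v) = (T i ω *ᵥ v) ⬝ᵥ z := dotProduct_comm _ _
      rw [hcomm] at *
      linarith [hk, dotProduct_comm z (T i ω *ᵥ v)]
    have hint1 : Integrable (fun ω => v ⬝ᵥ (rpcPhi (T i ω) *ᵥ v)) μ :=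
      RPCAux.integrable_qf (hPhiInt i) v v
    have hint2a : Integrable (fun ω => v ⬝ᵥ (T i ω *ᵥ v)) μ := RPCAux.integrable_qf (hint i) v v
    have hint2b : Integrable (fun ω => z ⬝ᵥ (T i ω *ᵥ v)) μ := RPCAux.integrable_qf (hint i) z v
    have hint2c : Integrable (fun ω => (T i ω).trace) μ := RPCAux.integrable_trace (hint i)
    have hint2d : Integrable
        (fun ω => 2 * (z ⬝ᵥ (T i ω *ᵥ v)) - (T i ω).trace * (z ⬝ᵥ z)) μ :=
      (hint2b.const_mul 2).sub (hint2c.mul_const _)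
    have hint2 : Integrable g μ := hint2a.sub hint2d
    have hle := integral_mono_ae hint1 hint2 hbound
    rw [hrw]
    refine le_trans hle ?_
    have hgint : ∫ ω, g ω ∂μ
        = v ⬝ᵥ (M i *ᵥ v) - (2 * (z ⬝ᵥ (M i *ᵥ v)) - (M i).trace * (z ⬝ᵥ z)) := by
      show ∫ ω, (v ⬝ᵥ (T i ω *ᵥ v) - (2 * (z ⬝ᵥ (T i ω *ᵥ v)) - (T i ω).trace * (z ⬝ᵥ z))) ∂μ
        = _
      rw [integral_sub hint2a hint2d,
        integral_sub (hint2b.const_mul 2) (hint2c.mul_const _),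
        integral_const_mul, integral_mul_const,
        RPCAux.integral_qf (hint i) v v, RPCAux.integral_qf (hint i) z v,
        RPCAux.integral_trace (hint i)]
    rw [hgint, RPCAux.qf_rpcPhi (hMherm i) v]
    apply le_of_eq
    have hzq : z ⬝ᵥ (M i *ᵥ v) = (M i).trace⁻¹ * ((M i *ᵥ v) ⬝ᵥ (M i *ᵥ v)) := by
      rw [hz, smul_dotProduct, smul_eq_mul]
    have hzz : z ⬝ᵥ z
        = (M i).trace⁻¹ * ((M i).trace⁻¹ * ((M i *ᵥ v) ⬝ᵥ (M i *ᵥ v))) := by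
      rw [hz, smul_dotProduct, dotProduct_smul, smul_eq_mul, smul_eq_mul]
    rw [hzq, hzz]
    field_simp
    ring
  have hMP : ∀ i (v : Fin N → ℝ), v ⬝ᵥ (M i *ᵥ v) ≤ v ⬝ᵥ (P i *ᵥ v) := by
    intro i
    induction i with
    | zero =>
      intro v
      rw [hM0, hP0]
    | succ i ih =>
      intro v
      have hHpsd : (P i - M i).PosSemidef := by
        refine RPCAux.psd_mk ((hPherm i).sub (hMherm i)) fun w => ?_
        rw [Matrix.sub_mulVec, dotProduct_sub]
        have := ih w
        linarith
      have hsum : M i + (P i - M i) = P i := by abel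
      calc v ⬝ᵥ (M (i + 1) *ᵥ v) ≤ v ⬝ᵥ (rpcPhi (M i) *ᵥ v) := hstep i v
        _ ≤ v ⬝ᵥ (rpcPhi (M i + (P i - M i)) *ᵥ v) :=
            RPCAux.phi_superadd (hMpsd i) hHpsd (hMtr i) v
        _ = v ⬝ᵥ (rpcPhi (P i) *ᵥ v) := by rw [hsum]
        _ = v ⬝ᵥ (P (i + 1) *ᵥ v) := by rw [hPsucc i]
  -- scalar bound on eigenvalues of P n
  have heignn : ∀ j, 0 ≤ eig j := by
    intro j
    rw [heig]
    exact hA.eigenvalues_nonneg (σ j)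
  have hscalar : ∀ j, (RPCAux.phiVec (N := N))^[n] d j ≤ c := by
    intro j
    have hdeq : d = eig ∘ ⇑(σ⁻¹) := by
      funext l
      rw [heig]
      simp
    rw [hdeq, RPCAux.phiVec_iter_comp_perm]
    exact RPCAux.Scalar.scalar_main hN eig heignn hanti r a ε ha hε n hn _
  have h1 : (c • (1 : Matrix (Fin N) (Fin N) ℝ) - P n).PosSemidef := by
    have := RPCAux.smul_one_sub_conj_psd U hUu ((RPCAux.phiVec (N := N))^[n] d) c hscalar
    exact this
  refine RPCAux.psd_mk ?_ fun v => ?_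
  · have hone : (c • (1 : Matrix (Fin N) (Fin N) ℝ)).IsHermitian := by
      rw [Matrix.smul_one_eq_diagonal]
      exact Matrix.isHermitian_diagonal _
    exact hone.sub (hMherm n)
  · have h2 := RPCAux.psd_def h1 v
    have h3 := hMP n v
    rw [Matrix.sub_mulVec, dotProduct_sub] at h2 ⊢
    linarith
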